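/- For all natural numbers n, ∑_{j=0}^{n} j^5 · binomial(2n, n-j) = (1/2)·binomial(2n, n)·n^2·(2n-1); equivalently, 2·∑_{j=0}^{n} j^5·binomial(2n, n-j) = binomial(2n, n)·n^2·(2n-1). -/

import Mathlib

def Pfun (n k : ℤ) : ℤ :=
  k^5 + (-2-4*n)*k^4 + (8*n+6*n^2)*k^3 + (1-2*n-10*n^2-4*n^3)*k^2
    + (n^4+4*n^3+4*n^2-2*n)*k

lemma choose_cast (n k : ℕ) (hk : k ≤ 2*n) :
    ((Nat.choose (2*n) (k+1) : ℤ)) * (k+1)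
      = (Nat.choose (2*n) k : ℤ) * ((2*n : ℤ) - k) := by
  have h := Nat.choose_succ_right_eq (2*n) k
  have h2 : ((2*n - k : ℕ) : ℤ) = (2*n : ℤ) - k := by
    push_cast [Nat.cast_sub hk]; ring
  rw [← h2]
  exact_mod_cast h

lemma step (n k : ℕ) (hk : k ≤ n) :
    2 * ((n:ℤ) - k)^5 * Nat.choose (2*n) k
      = Pfun n (k+1) * Nat.choose (2*n) (k+1) - Pfun n k * Nat.choose (2*n) k := by
  have h := choose_cast n k (by omega)
  have hk1 : ((k:ℤ)+1) ≠ 0 := by positivity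
  apply mul_left_cancel₀ hk1
  simp only [Pfun]
  linear_combination -((((k:ℤ)+1)^5 + (-2-4*(n:ℤ))*((k:ℤ)+1)^4 + (8*(n:ℤ)+6*(n:ℤ)^2)*((k:ℤ)+1)^3
    + (1-2*(n:ℤ)-10*(n:ℤ)^2-4*(n:ℤ)^3)*((k:ℤ)+1)^2
    + ((n:ℤ)^4+4*(n:ℤ)^3+4*(n:ℤ)^2-2*(n:ℤ))*((k:ℤ)+1)) * h)

lemma sum_eq (n : ℕ) :
    (2 * ∑ j ∈ Finset.range (n+1), (j:ℤ) ^ 5 * Nat.choose (2*n) (n-j))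
      = Nat.choose (2*n) n * (n:ℤ)^2 * (2*(n:ℤ) - 1) := by
  have hrefl : ∑ j ∈ Finset.range (n+1), (j:ℤ) ^ 5 * Nat.choose (2*n) (n-j)
      = ∑ j ∈ Finset.range (n+1), ((n:ℤ) - j) ^ 5 * Nat.choose (2*n) j := by
    rw [← Finset.sum_range_reflect (fun j => ((n:ℤ) - j) ^ 5 * Nat.choose (2*n) j) (n+1)]
    apply Finset.sum_congr rfl
    intro j hj
    simp only [Finset.mem_range] at hj
    have hj' : j ≤ n := by omega
    have he : n + 1 - 1 - j = n - j := by omega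
    rw [he]
    have h1 : ((n - j : ℕ) : ℤ) = (n:ℤ) - j := by
      push_cast [Nat.cast_sub hj']; ring
    rw [h1]
    ring_nf
  rw [hrefl, Finset.mul_sum]
  have hterm : ∀ j ∈ Finset.range (n+1),
      2 * (((n:ℤ) - j) ^ 5 * Nat.choose (2*n) j)
        = Pfun n ((j+1 : ℕ) : ℤ) * Nat.choose (2*n) (j+1)
          - Pfun n (j : ℤ) * Nat.choose (2*n) j := by
    intro j hj
    simp only [Finset.mem_range] at hj
    push_cast
    rw [← step n j (by omega)]; ring
  rw [Finset.sum_congr rfl hterm]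
  rw [Finset.sum_range_sub (fun k => Pfun n (k:ℤ) * (Nat.choose (2*n) k : ℤ)) (n+1)]
  have h0 : Pfun n ((0:ℕ):ℤ) = 0 := by simp [Pfun]
  rw [h0, zero_mul, sub_zero]
  have h2 : ((Nat.choose (2*n) (n+1) : ℤ)) * ((n:ℤ)+1)
      = (Nat.choose (2*n) n : ℤ) * (n:ℤ) := by
    have := choose_cast n n (by omega)
    push_cast at this ⊢
    linarith [this]
  have hn1 : ((n:ℤ)+1) ≠ 0 := by positivity
  apply mul_left_cancel₀ hn1
  simp only [Pfun]
  push_cast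
  linear_combination (((n:ℤ)+1)^5 + (-2-4*(n:ℤ))*((n:ℤ)+1)^4 + (8*(n:ℤ)+6*(n:ℤ)^2)*((n:ℤ)+1)^3
    + (1-2*(n:ℤ)-10*(n:ℤ)^2-4*(n:ℤ)^3)*((n:ℤ)+1)^2
    + ((n:ℤ)^4+4*(n:ℤ)^3+4*(n:ℤ)^2-2*(n:ℤ))*((n:ℤ)+1)) * h2

theorem sum_choose_B5 (n : ℕ) :
    2 * ∑ j ∈ Finset.range (n + 1), j ^ 5 * Nat.choose (2 * n) (n - j) =
      Nat.choose (2 * n) n * n ^ 2 * (2 * n - 1) := by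
  rcases Nat.eq_zero_or_pos n with h0 | h1
  · subst h0; decide
  · have key := sum_eq n
    have hc : ((2 * n - 1 : ℕ) : ℤ) = 2*(n:ℤ) - 1 := by
      have h : 1 ≤ 2*n := by omega
      push_cast [Nat.cast_sub h]; ring
    have : ((2 * ∑ j ∈ Finset.range (n + 1), j ^ 5 * Nat.choose (2 * n) (n - j) : ℕ) : ℤ)
        = ((Nat.choose (2 * n) n * n ^ 2 * (2 * n - 1) : ℕ) : ℤ) := by
      push_cast [hc]
      convert key using 2
    exact_mod_cast this
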